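/- Let 0 < α ≤ 2, p1, p2 > 0, P = 1/p1 + 1/p2 with α/(1+α) < P < α and P ≠ 1. Assume additionally P_{(1+α)/α,1/α} := (1+α)/(α p1) + 1/(α p2) > 1. Let g0 satisfy |∂_2 g0(u)| ≤ C ρ0(u)^{1/p1−1} and |∂_{12} g0(u)| ≤ C ρ0(u)^{−1} for all u ≠ 0, where ρ0(u) = |u1|^{p1}+|u2|^{p2}. Then for every t > 0, h̃1(t;u) := ∂_2 g0(t−u1, −u2) − ∂_2 g0(−u1,−u2) satisfies ∫_{ℝ²} |h̃1(t;u)|^α du < ∞. -/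

import Mathlib

open MeasureTheory

/-- `ρ₀(u) = |u₁|^{p₁} + |u₂|^{p₂}`. -/
noncomputable def rho0 (p1 p2 : ℝ) (u : ℝ × ℝ) : ℝ := |u.1| ^ p1 + |u.2| ^ p2

/-- Partial derivative `∂₂ g`. -/
noncomputable def pd2 (g : ℝ × ℝ → ℝ) (u : ℝ × ℝ) : ℝ := deriv (fun b => g (u.1, b)) u.2

/-- Mixed partial derivative `∂₁₂ g`. -/
noncomputable def pd12 (g : ℝ × ℝ → ℝ) (u : ℝ × ℝ) : ℝ :=
  deriv (fun b => deriv (fun a => g (a, b)) u.1) u.2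

open Set

/-! ### 1D integrability lemmas -/

lemma abs_rpow_II (e : ℝ) (he : -1 < e) (a b : ℝ) :
    IntervalIntegrable (fun x : ℝ => |x| ^ e) volume a b := by
  have key : ∀ c : ℝ, IntervalIntegrable (fun x : ℝ => |x| ^ e) volume 0 c := by
    intro c
    rcases le_or_gt 0 c with hc | hc
    · rw [intervalIntegrable_iff_integrableOn_Ioc_of_le hc]
      exact ((intervalIntegral.intervalIntegrable_rpow' he (a := 0) (b := c)).1).congr_fun
        (fun x hx => by rw [abs_of_pos hx.1]) measurableSet_Ioc
    · rw [IntervalIntegrable.iff_comp_neg]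
      simp only [abs_neg, neg_zero]
      rw [intervalIntegrable_iff_integrableOn_Ioc_of_le (by linarith : (0:ℝ) ≤ -c)]
      exact ((intervalIntegral.intervalIntegrable_rpow' he (a := 0) (b := -c)).1).congr_fun
        (fun x hx => by rw [abs_of_pos hx.1]) measurableSet_Ioc
  exact ((key a).symm.trans (key b))

lemma abs_rpow_int_Ioo (e : ℝ) (he : -1 < e) (a b : ℝ) :
    IntegrableOn (fun x : ℝ => |x| ^ e) (Ioo a b) := by
  rcases le_or_gt a b with h | h
  · exact ((abs_rpow_II e he a b).1).mono_set Ioo_subset_Ioc_self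
  · simp [Ioo_eq_empty_of_le h.le]

lemma abs_rpow_int_Icc (e : ℝ) (he : -1 < e) (a b : ℝ) :
    IntegrableOn (fun x : ℝ => |x| ^ e) (Icc a b) :=
  (integrableOn_Icc_iff_integrableOn_Ioo).2 (abs_rpow_int_Ioo e he a b)

lemma abs_sub_rpow_int_Icc (e : ℝ) (he : -1 < e) (c a b : ℝ) :
    IntegrableOn (fun x : ℝ => |c - x| ^ e) (Icc a b) := by
  rw [integrableOn_Icc_iff_integrableOn_Ioo]
  have h := abs_rpow_int_Ioo e he (c - b) (c - a)
  have hmp : MeasurePreserving (fun x : ℝ => c - x) volume volume :=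
    Measure.measurePreserving_sub_left volume c
  have hme : MeasurableEmbedding (fun x : ℝ => c - x) :=
    (MeasurableEquiv.subLeft c).measurableEmbedding
  have h2 := (hmp.integrableOn_comp_preimage hme).2 h
  have hset : (fun x : ℝ => c - x) ⁻¹' Ioo (c - b) (c - a) = Ioo a b := by
    ext x
    simp only [mem_preimage, mem_Ioo]
    constructor <;> (intro h3; constructor <;> linarith [h3.1, h3.2])
  rwa [hset] at h2

lemma abs_rpow_int_far (e : ℝ) (he : e < -1) (M : ℝ) (hM : 0 < M) :
    IntegrableOn (fun x : ℝ => |x| ^ e) {x : ℝ | M < |x|} := by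
  have hset : {x : ℝ | M < |x|} = Iio (-M) ∪ Ioi M := by
    ext x; simp only [mem_setOf_eq, lt_abs, mem_union, mem_Iio, mem_Ioi]
    constructor
    · rintro (h | h)
      · right; exact h
      · left; linarith
    · rintro (h | h)
      · right; linarith
      · left; exact h
  rw [hset]
  apply IntegrableOn.union
  · have h1 : IntegrableOn (fun x : ℝ => x ^ e) (Ioi M) := integrableOn_Ioi_rpow_of_lt he hM
    have h2 : IntegrableOn (fun x : ℝ => |x| ^ e) (Ioi M) :=
      h1.congr_fun (fun x hx => by rw [abs_of_pos (hM.trans hx)]) measurableSet_Ioi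
    have h3 := (Measure.measurePreserving_neg (volume : Measure ℝ)).integrableOn_comp_preimage
      (MeasurableEquiv.neg ℝ).measurableEmbedding (f := fun x : ℝ => |x| ^ e) (s := Ioi M)
    rw [show (Neg.neg ⁻¹' Ioi M : Set ℝ) = Iio (-M) by ext x; simp [lt_neg]] at h3
    exact (h3.2 h2).congr_fun (fun x hx => by simp) measurableSet_Iio
  · have h1 : IntegrableOn (fun x : ℝ => x ^ e) (Ioi M) := integrableOn_Ioi_rpow_of_lt he hM
    exact h1.congr_fun (fun x hx => by rw [abs_of_pos (hM.trans hx)]) measurableSet_Ioi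

lemma prod_intOn {f g : ℝ → ℝ} {s t : Set ℝ}
    (hf : IntegrableOn f s) (hg : IntegrableOn g t) :
    IntegrableOn (fun u : ℝ × ℝ => f u.1 * g u.2) (s ×ˢ t) := by
  rw [IntegrableOn, Measure.volume_eq_prod, ← Measure.prod_restrict]
  exact hf.mul_prod hg

lemma line1_null (c : ℝ) : volume {u : ℝ × ℝ | u.1 = c} = 0 := by
  have h : {u : ℝ × ℝ | u.1 = c} = {c} ×ˢ (univ : Set ℝ) := by
    ext u; simp [eq_comm, Prod.ext_iff]
  rw [h, Measure.volume_eq_prod, Measure.prod_prod]; simp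

lemma line2_null (c : ℝ) : volume {u : ℝ × ℝ | u.2 = c} = 0 := by
  have h : {u : ℝ × ℝ | u.2 = c} = (univ : Set ℝ) ×ˢ {c} := by
    ext u; simp [eq_comm, Prod.ext_iff]
  rw [h, Measure.volume_eq_prod, Measure.prod_prod]; simp

/-! ### Elementary rpow estimates -/

lemma amgm_max {A B l : ℝ} (hA : 0 < A) (hB : 0 < B) (hl0 : 0 ≤ l) (hl1 : l ≤ 1) :
    A ^ l * B ^ (1 - l) ≤ max A B := by
  have hm : 0 < max A B := lt_max_of_lt_left hA
  calc A ^ l * B ^ (1 - l) ≤ (max A B) ^ l * (max A B) ^ (1 - l) := by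
        apply mul_le_mul (Real.rpow_le_rpow hA.le (le_max_left _ _) hl0)
          (Real.rpow_le_rpow hB.le (le_max_right _ _) (by linarith))
          (Real.rpow_nonneg hB.le _) (Real.rpow_nonneg hm.le _)
    _ = max A B := by rw [← Real.rpow_add hm]; simp

lemma sum_rpow_le {A B c l : ℝ} (hA : 0 < A) (hB : 0 < B) (hc : c ≤ 0)
    (hl0 : 0 ≤ l) (hl1 : l ≤ 1) : (A + B) ^ c ≤ A ^ (l * c) * B ^ ((1 - l) * c) := by
  have h1 : A ^ l * B ^ (1 - l) ≤ A + B :=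
    (amgm_max hA hB hl0 hl1).trans (max_le_add_of_nonneg hA.le hB.le)
  have hpos : 0 < A ^ l * B ^ (1 - l) :=
    mul_pos (Real.rpow_pos_of_pos hA _) (Real.rpow_pos_of_pos hB _)
  calc (A + B) ^ c ≤ (A ^ l * B ^ (1 - l)) ^ c := Real.rpow_le_rpow_of_nonpos hpos h1 hc
    _ = A ^ (l * c) * B ^ ((1 - l) * c) := by
        rw [Real.mul_rpow (Real.rpow_nonneg hA.le _) (Real.rpow_nonneg hB.le _),
          ← Real.rpow_mul hA.le, ← Real.rpow_mul hB.le]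

lemma max_rpow_le {A B c l : ℝ} (hA : 0 < A) (hB : 0 < B) (hc : c ≤ 0)
    (hl0 : 0 ≤ l) (hl1 : l ≤ 1) : (max A B) ^ c ≤ A ^ (l * c) * B ^ ((1 - l) * c) := by
  have hpos : 0 < A ^ l * B ^ (1 - l) :=
    mul_pos (Real.rpow_pos_of_pos hA _) (Real.rpow_pos_of_pos hB _)
  calc (max A B) ^ c ≤ (A ^ l * B ^ (1 - l)) ^ c :=
        Real.rpow_le_rpow_of_nonpos hpos (amgm_max hA hB hl0 hl1) hc
    _ = A ^ (l * c) * B ^ ((1 - l) * c) := by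
        rw [Real.mul_rpow (Real.rpow_nonneg hA.le _) (Real.rpow_nonneg hB.le _),
          ← Real.rpow_mul hA.le, ← Real.rpow_mul hB.le]

lemma add_rpow_le_two_rpow {a b α : ℝ} (ha : 0 ≤ a) (hb : 0 ≤ b) (hα : 0 ≤ α) :
    (a + b) ^ α ≤ 2 ^ α * (a ^ α + b ^ α) := by
  have h1 : a + b ≤ 2 * max a b := by
    rcases le_total a b with h | h <;> simp [max_eq_right, max_eq_left, h] <;> linarith
  calc (a + b) ^ α ≤ (2 * max a b) ^ α :=
        Real.rpow_le_rpow (by linarith) h1 hα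
    _ = 2 ^ α * (max a b) ^ α := Real.mul_rpow (by norm_num) (le_max_of_le_left ha)
    _ ≤ 2 ^ α * (a ^ α + b ^ α) := by
        have h2 : (max a b) ^ α ≤ a ^ α + b ^ α := by
          rcases le_total a b with h | h
          · rw [max_eq_right h]; nlinarith [Real.rpow_nonneg ha α]
          · rw [max_eq_left h]; nlinarith [Real.rpow_nonneg hb α]
        nlinarith [Real.rpow_nonneg (by norm_num : (0:ℝ) ≤ 2) α]

lemma rho_term_le {p1 p2 q l β : ℝ} (hp1 : 0 < p1) (hp2 : 0 < p2)
    (hq1 : p1 * l = q) (hq2 : p2 * (1 - l) = q) (hl0 : 0 ≤ l) (hl1 : l ≤ 1) (hβ : β ≤ 0)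
    {x y : ℝ} (hx : x ≠ 0) (hy : y ≠ 0) :
    (|x| ^ p1 + |y| ^ p2) ^ β ≤ |x| ^ (q * β) * |y| ^ (q * β) := by
  have hA : 0 < |x| ^ p1 := Real.rpow_pos_of_pos (abs_pos.2 hx) _
  have hB : 0 < |y| ^ p2 := Real.rpow_pos_of_pos (abs_pos.2 hy) _
  have h := sum_rpow_le hA hB hβ hl0 hl1
  rwa [← Real.rpow_mul (abs_nonneg x), ← Real.rpow_mul (abs_nonneg y),
    ← mul_assoc, ← mul_assoc, hq1, hq2] at h

/-! ### Calculus lemmas -/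

section calc0
variable {g0 : ℝ × ℝ → ℝ}
variable (hsm : ContDiffOn ℝ 2 g0 {(0 : ℝ × ℝ)}ᶜ)
include hsm

omit hsm in
lemma mem_compl0 {w : ℝ × ℝ} (hw : w ≠ 0) : w ∈ ({(0 : ℝ × ℝ)}ᶜ : Set (ℝ×ℝ)) := by
  simpa using hw

lemma diffAt {w : ℝ × ℝ} (hw : w ≠ 0) : DifferentiableAt ℝ g0 w :=
  (hsm.differentiableOn (by norm_num)).differentiableAt
    (isOpen_compl_singleton.mem_nhds (mem_compl0 hw))

lemma pd2_eq {w : ℝ × ℝ} (hw : w ≠ 0) : pd2 g0 w = fderiv ℝ g0 w (0, 1) := by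
  have hg : HasFDerivAt g0 (fderiv ℝ g0 w) w := (diffAt hsm hw).hasFDerivAt
  have hL : HasDerivAt (fun b : ℝ => ((w.1, b) : ℝ × ℝ)) (0, 1) w.2 :=
    (hasDerivAt_const _ _).prodMk (hasDerivAt_id _)
  exact (hg.comp_hasDerivAt w.2 hL).deriv

lemma pd1_eq {w : ℝ × ℝ} (hw : w ≠ 0) :
    deriv (fun a => g0 (a, w.2)) w.1 = fderiv ℝ g0 w (1, 0) := by
  have hg : HasFDerivAt g0 (fderiv ℝ g0 w) w := (diffAt hsm hw).hasFDerivAt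
  have hL : HasDerivAt (fun a : ℝ => ((a, w.2) : ℝ × ℝ)) (1, 0) w.1 :=
    (hasDerivAt_id _).prodMk (hasDerivAt_const _ _)
  exact (hg.comp_hasDerivAt w.1 hL).deriv

lemma hasDerivAt_pd2 {w : ℝ × ℝ} (hw : w ≠ 0) :
    HasDerivAt (fun a => pd2 g0 (a, w.2)) (pd12 g0 w) w.1 := by
  have hct : ContDiffAt ℝ 2 g0 w :=
    hsm.contDiffAt (isOpen_compl_singleton.mem_nhds (mem_compl0 hw))
  have hF : DifferentiableAt ℝ (fderiv ℝ g0) w :=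
    (hct.fderiv_right (m := 1) (by norm_num)).differentiableAt one_ne_zero
  have hF' : HasFDerivAt (fderiv ℝ g0) (fderiv ℝ (fderiv ℝ g0) w) w := hF.hasFDerivAt
  have ev : ∀ᶠ y in nhds w, HasFDerivAt g0 (fderiv ℝ g0 y) y := by
    filter_upwards [isOpen_compl_singleton.mem_nhds (mem_compl0 hw)] with y hy
    exact (diffAt hsm (by simpa using hy)).hasFDerivAt
  have symm : ∀ v u : ℝ × ℝ,
      fderiv ℝ (fderiv ℝ g0) w v u = fderiv ℝ (fderiv ℝ g0) w u v :=
    second_derivative_symmetric_of_eventually ev hF'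
  have hc : HasDerivAt (fun a : ℝ => fderiv ℝ g0 (a, w.2)) (fderiv ℝ (fderiv ℝ g0) w (1, 0)) w.1 :=
    hF'.comp_hasDerivAt w.1 ((hasDerivAt_id _).prodMk (hasDerivAt_const _ _))
  have happ : HasDerivAt (fun a : ℝ => fderiv ℝ g0 (a, w.2) (0, 1))
      (fderiv ℝ (fderiv ℝ g0) w (1, 0) (0, 1)) w.1 := by
    simpa using hc.clm_apply (hasDerivAt_const w.1 ((0 : ℝ), (1 : ℝ)))
  have hnz : ∀ᶠ a in nhds w.1, ((a, w.2) : ℝ × ℝ) ≠ 0 := by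
    have hco : ContinuousAt (fun a : ℝ => ((a, w.2) : ℝ × ℝ)) w.1 :=
      continuousAt_id.prodMk continuousAt_const
    filter_upwards [hco.preimage_mem_nhds
      (isOpen_compl_singleton.mem_nhds (mem_compl0 hw))] with a ha
    simpa using ha
  have hev : (fun a => pd2 g0 (a, w.2)) =ᶠ[nhds w.1] fun a => fderiv ℝ g0 (a, w.2) (0, 1) := by
    filter_upwards [hnz] with a ha
    exact pd2_eq hsm ha
  have hder : HasDerivAt (fun a => pd2 g0 (a, w.2))
      (fderiv ℝ (fderiv ℝ g0) w (1, 0) (0, 1)) w.1 := happ.congr_of_eventuallyEq hev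
  have hval : pd12 g0 w = fderiv ℝ (fderiv ℝ g0) w (0, 1) (1, 0) := by
    have hnz2 : ∀ᶠ b in nhds w.2, ((w.1, b) : ℝ × ℝ) ≠ 0 := by
      have hco : ContinuousAt (fun b : ℝ => ((w.1, b) : ℝ × ℝ)) w.2 :=
        continuousAt_const.prodMk continuousAt_id
      filter_upwards [hco.preimage_mem_nhds
        (isOpen_compl_singleton.mem_nhds (mem_compl0 hw))] with b hb
      simpa using hb
    have hev2 : (fun b => deriv (fun a => g0 (a, b)) w.1) =ᶠ[nhds w.2]
        fun b => fderiv ℝ g0 (w.1, b) (1, 0) := by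
      filter_upwards [hnz2] with b hb
      exact pd1_eq hsm hb
    have hc2 : HasDerivAt (fun b : ℝ => fderiv ℝ g0 (w.1, b))
        (fderiv ℝ (fderiv ℝ g0) w (0, 1)) w.2 :=
      hF'.comp_hasDerivAt w.2 ((hasDerivAt_const _ _).prodMk (hasDerivAt_id _))
    have happ2 : HasDerivAt (fun b : ℝ => fderiv ℝ g0 (w.1, b) (1, 0))
        (fderiv ℝ (fderiv ℝ g0) w (0, 1) (1, 0)) w.2 := by
      simpa using hc2.clm_apply (hasDerivAt_const w.2 ((1 : ℝ), (0 : ℝ)))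
    rw [pd12, hev2.deriv_eq, happ2.deriv]
  rw [hval, symm (0,1) (1,0)]
  exact hder

end calc0

lemma rho0_zero {p1 p2 : ℝ} (hp1 : 0 < p1) (hp2 : 0 < p2) : rho0 p1 p2 0 = 0 := by
  simp [rho0, Real.zero_rpow hp1.ne', Real.zero_rpow hp2.ne']

lemma ne_zero_of_rho0 {p1 p2 : ℝ} (hp1 : 0 < p1) (hp2 : 0 < p2) {w : ℝ × ℝ} {r : ℝ}
    (hr : 0 < r) (h : r ≤ rho0 p1 p2 w) : w ≠ 0 := by
  intro h0; rw [h0, rho0_zero hp1 hp2] at h; linarith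

lemma far_bound {g0 : ℝ × ℝ → ℝ} (hsm : ContDiffOn ℝ 2 g0 {(0 : ℝ × ℝ)}ᶜ)
    {p1 p2 C : ℝ} (hp1 : 0 < p1) (hp2 : 0 < p2) (hC : 0 < C)
    (hD12 : ∀ u : ℝ × ℝ, u ≠ 0 → |pd12 g0 u| ≤ C * (rho0 p1 p2 u)⁻¹)
    {t r x y : ℝ} (ht : 0 < t) (hr : 0 < r)
    (hseg : ∀ s ∈ Icc (0:ℝ) t, r ≤ rho0 p1 p2 (s - x, -y)) :
    |pd2 g0 (t - x, -y) - pd2 g0 (-x, -y)| ≤ C * t / r := by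
  set φ : ℝ → ℝ := fun s => pd2 g0 (s - x, -y) with hφ
  have hderiv : ∀ s ∈ Icc (0:ℝ) t,
      HasDerivWithinAt φ (pd12 g0 (s - x, -y)) (Icc (0:ℝ) t) s := by
    intro s hs
    have hw : ((s - x, -y) : ℝ × ℝ) ≠ 0 := ne_zero_of_rho0 hp1 hp2 hr (hseg s hs)
    have h1 := hasDerivAt_pd2 hsm hw
    have h2 : HasDerivAt (fun s : ℝ => s - x) 1 s := (hasDerivAt_id s).sub_const x
    have h3 := HasDerivAt.comp s (by simpa using h1) h2
    rw [mul_one] at h3; exact h3.hasDerivWithinAt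
  have hbound : ∀ s ∈ Icc (0:ℝ) t, ‖pd12 g0 (s - x, -y)‖ ≤ C / r := by
    intro s hs
    have hw : ((s - x, -y) : ℝ × ℝ) ≠ 0 := ne_zero_of_rho0 hp1 hp2 hr (hseg s hs)
    have h1 := hD12 _ hw
    have h2 : (rho0 p1 p2 (s - x, -y))⁻¹ ≤ r⁻¹ := inv_anti₀ hr (hseg s hs)
    calc ‖pd12 g0 (s - x, -y)‖ ≤ C * (rho0 p1 p2 (s - x, -y))⁻¹ := h1
      _ ≤ C * r⁻¹ := by nlinarith
      _ = C / r := by ring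
  have hmvt := Convex.norm_image_sub_le_of_norm_hasDerivWithin_le hderiv hbound (convex_Icc 0 t)
    (left_mem_Icc.2 ht.le) (right_mem_Icc.2 ht.le)
  have h0 : φ 0 = pd2 g0 (-x, -y) := by simp [hφ]
  have h1 : φ t = pd2 g0 (t - x, -y) := rfl
  rw [h0, h1] at hmvt
  calc |pd2 g0 (t - x, -y) - pd2 g0 (-x, -y)| ≤ C / r * ‖t - 0‖ := hmvt
    _ = C * t / r := by rw [sub_zero, Real.norm_eq_abs, abs_of_pos ht]; ring

lemma rpow_div_bound {a r : ℝ} (ha : 0 ≤ a) (hr : 0 < r) {α : ℝ} (hα : 0 ≤ α) {d : ℝ}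
    (hd : |d| ≤ a / r) : |d| ^ α ≤ a ^ α * r ^ (-α) := by
  have h := Real.rpow_le_rpow (abs_nonneg d) hd hα
  rwa [Real.div_rpow ha hr.le, div_eq_mul_inv, ← Real.rpow_neg hr.le] at h

set_option maxHeartbeats 3200000 in
theorem stmt_13 (α p1 p2 C : ℝ) (hα0 : 0 < α) (hα2 : α ≤ 2)
    (hp1 : 0 < p1) (hp2 : 0 < p2)
    (hPlow : α / (1 + α) < 1 / p1 + 1 / p2) (hPhigh : 1 / p1 + 1 / p2 < α)
    (hPne : 1 / p1 + 1 / p2 ≠ 1)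
    (hPc : 1 < (1 + α) / (α * p1) + 1 / (α * p2)) (hC : 0 < C)
    (g0 : ℝ × ℝ → ℝ) (hmeas : Measurable g0)
    (hsm : ContDiffOn ℝ 2 g0 {(0 : ℝ × ℝ)}ᶜ)
    (hD2 : ∀ u : ℝ × ℝ, u ≠ 0 → |pd2 g0 u| ≤ C * rho0 p1 p2 u ^ (1 / p1 - 1))
    (hD12 : ∀ u : ℝ × ℝ, u ≠ 0 → |pd12 g0 u| ≤ C * (rho0 p1 p2 u)⁻¹) :
    ∀ t : ℝ, 0 < t →
      Integrable (fun u : ℝ × ℝ => |pd2 g0 (t - u.1, -u.2) - pd2 g0 (-u.1, -u.2)| ^ α) volume := by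
  intro t ht
  set f : ℝ × ℝ → ℝ :=
    fun u => |pd2 g0 (t - u.1, -u.2) - pd2 g0 (-u.1, -u.2)| ^ α with hfdef
  have hfnonneg : ∀ u, 0 ≤ f u := fun u => Real.rpow_nonneg (abs_nonneg _) _
  -- numerology
  set c : ℝ := 1 / p1 - 1 with hcdef
  set β : ℝ := c * α with hβdef
  set q : ℝ := p1 * p2 / (p1 + p2) with hqdef
  set l : ℝ := p2 / (p1 + p2) with hldef
  have hp12 : 0 < p1 + p2 := by linarith
  have hq : 0 < q := div_pos (mul_pos hp1 hp2) hp12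
  have hl0 : 0 ≤ l := le_of_lt (div_pos hp2 hp12)
  have hl1 : l ≤ 1 := by
    rw [hldef, div_le_one hp12]; linarith
  have hql1 : p1 * l = q := by rw [hldef, hqdef]; field_simp
  have hql2 : p2 * (1 - l) = q := by
    rw [hldef, hqdef]; field_simp; ring
  have hp1α : 1 < p1 * α := by
    have h1 : 1 / p1 < α := by
      have := div_pos (by norm_num : (0:ℝ) < 1) hp2
      linarith
    calc (1:ℝ) = p1 * (1 / p1) := by field_simp
      _ < p1 * α := by exact mul_lt_mul_of_pos_left h1 hp1
  have hp2α : 1 < p2 * α := by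
    have h1 : 1 / p2 < α := by
      have := div_pos (by norm_num : (0:ℝ) < 1) hp1
      linarith
    calc (1:ℝ) = p2 * (1 / p2) := by field_simp
      _ < p2 * α := by exact mul_lt_mul_of_pos_left h1 hp2
  have hqα : 1 < q * α := by
    rw [hqdef]
    rw [show p1 * p2 / (p1 + p2) * α = (p1 * p2 * α) / (p1 + p2) by ring]
    rw [lt_div_iff₀ hp12]
    have h := mul_lt_mul_of_pos_left hPhigh (mul_pos hp1 hp2)
    have h2 : p1 * p2 * (1 / p1 + 1 / p2) = p2 + p1 := by field_simp
    rw [h2] at h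
    linarith
  have hβlow : -(1 / p1 + 1 / p2) < β := by
    -- from hPc : 1 < (1+α)/(α p1) + 1/(α p2)
    have h := mul_lt_mul_of_pos_left hPc hα0
    have h2 : α * ((1 + α) / (α * p1) + 1 / (α * p2)) = (1 + α) / p1 + 1 / p2 := by
      field_simp
    rw [h2, mul_one] at h
    have h3 : β = α / p1 - α := by rw [hβdef, hcdef]; ring
    rw [h3]
    have h4 : (1 + α) / p1 = 1 / p1 + α / p1 := by ring
    rw [h4] at h
    linarith
  have hqβ : -1 < q * β := by
    have h1 : q * (1 / p1 + 1 / p2) = 1 := by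
      rw [hqdef]; field_simp; ring
    nlinarith
  -- big constant
  set M : ℝ := 2 * t + 2 with hMdef
  have hM0 : 0 < M := by linarith
  have hM2t : 2 * t ≤ M := by linarith
  -- segment estimates
  have hsegx : ∀ x : ℝ, M < |x| → ∀ s ∈ Icc (0:ℝ) t, |x| / 2 ≤ |s - x| := by
    intro x hx s hs
    have h1 : |x| - |s| ≤ |s - x| := by
      have := abs_sub_abs_le_abs_sub x s
      rwa [abs_sub_comm] at this
    have h2 : |s| = s := abs_of_nonneg hs.1
    have h3 : s ≤ t := hs.2
    have h4 : 2 * t < |x| := lt_of_le_of_lt hM2t hx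
    linarith
  -- the basic far estimates
  have hrho_ge1 : ∀ (x y : ℝ), M < |x| → ∀ s ∈ Icc (0:ℝ) t,
      (|x| / 2) ^ p1 ≤ rho0 p1 p2 (s - x, -y) := by
    intro x y hx s hs
    have h1 : (|x| / 2) ^ p1 ≤ |s - x| ^ p1 :=
      Real.rpow_le_rpow (by positivity) (hsegx x hx s hs) hp1.le
    have h2 : (0:ℝ) ≤ |-y| ^ p2 := Real.rpow_nonneg (abs_nonneg _) _
    simp only [rho0]
    linarith
  have hrho_ge2 : ∀ (x y : ℝ), ∀ s ∈ Icc (0:ℝ) t,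
      |y| ^ p2 ≤ rho0 p1 p2 (s - x, -y) := by
    intro x y s hs
    have h2 : (0:ℝ) ≤ |s - x| ^ p1 := Real.rpow_nonneg (abs_nonneg _) _
    simp only [rho0, abs_neg]
    linarith
  -- a.e. measurability of the integrand
  have hfd : ContinuousOn (fderiv ℝ g0) ({(0:ℝ×ℝ)}ᶜ : Set (ℝ×ℝ)) :=
    hsm.continuousOn_fderiv_of_isOpen isOpen_compl_singleton (by norm_num)
  set s0 : Set (ℝ×ℝ) := ({((0:ℝ),(0:ℝ)), (t,(0:ℝ))} : Set (ℝ×ℝ))ᶜ with hs0def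
  have hs0open : IsOpen s0 :=
    (Set.Finite.isClosed (by simp : ({((0:ℝ),(0:ℝ)), (t,(0:ℝ))} : Set (ℝ×ℝ)).Finite)).isOpen_compl
  have hw1ne : ∀ u : ℝ×ℝ, u ∈ s0 → ((t - u.1, -u.2) : ℝ×ℝ) ≠ 0 := by
    intro u hu h
    rw [Prod.mk_eq_zero] at h
    apply hu
    right
    have h1 : u.1 = t := by linarith [h.1]
    have h2 : u.2 = 0 := by linarith [neg_eq_zero.1 h.2]
    exact Prod.ext h1 h2
  have hw2ne : ∀ u : ℝ×ℝ, u ∈ s0 → ((-u.1, -u.2) : ℝ×ℝ) ≠ 0 := by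
    intro u hu h
    rw [Prod.mk_eq_zero] at h
    apply hu
    left
    exact Prod.ext (neg_eq_zero.1 h.1) (neg_eq_zero.1 h.2)
  have hH : ContinuousOn (fun u : ℝ×ℝ =>
      |fderiv ℝ g0 (t - u.1, -u.2) (0,1) - fderiv ℝ g0 (-u.1, -u.2) (0,1)| ^ α) s0 := by
    have hc1 : ContinuousOn (fun u : ℝ×ℝ => fderiv ℝ g0 (t - u.1, -u.2) (0,1)) s0 := by
      apply ContinuousOn.clm_apply _ continuousOn_const
      apply hfd.comp ((continuous_const.sub continuous_fst).prodMk continuous_snd.neg).continuousOn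
      intro u hu
      simpa using hw1ne u hu
    have hc2 : ContinuousOn (fun u : ℝ×ℝ => fderiv ℝ g0 (-u.1, -u.2) (0,1)) s0 := by
      apply ContinuousOn.clm_apply _ continuousOn_const
      apply hfd.comp (continuous_fst.neg.prodMk continuous_snd.neg).continuousOn
      intro u hu
      simpa using hw2ne u hu
    exact ((hc1.sub hc2).abs).rpow_const (fun u _ => Or.inr hα0.le)
  have haes0 : ∀ᵐ u : ℝ×ℝ ∂volume, u ∈ s0 := by
    rw [MeasureTheory.ae_iff]
    apply measure_mono_null _ (line2_null 0)
    intro u hu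
    have h2 : u ∈ ({((0:ℝ),(0:ℝ)), (t,(0:ℝ))} : Set (ℝ×ℝ)) := not_not.mp hu
    rcases h2 with h | h
    · show u.2 = 0; rw [h]
    · show u.2 = 0; rw [mem_singleton_iff.mp h]
  have haesm : AEStronglyMeasurable f volume := by
    have h1 := hH.aestronglyMeasurable (μ := volume) hs0open.measurableSet
    rw [Measure.restrict_eq_self_of_ae_mem haes0] at h1
    apply h1.congr
    filter_upwards [haes0] with u hu
    show _ = |pd2 g0 (t - u.1, -u.2) - pd2 g0 (-u.1, -u.2)| ^ α
    rw [pd2_eq hsm (hw1ne u hu), pd2_eq hsm (hw2ne u hu)]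
  -- generic a.e. facts
  have hae3 : ∀ᵐ u : ℝ×ℝ ∂volume, u.2 ≠ 0 ∧ u.1 ≠ 0 ∧ u.1 ≠ t := by
    have h1 : ∀ᵐ u : ℝ×ℝ ∂volume, u.2 ≠ 0 := by
      rw [MeasureTheory.ae_iff]
      convert line2_null 0 using 2
      simp
    have h2 : ∀ᵐ u : ℝ×ℝ ∂volume, u.1 ≠ 0 := by
      rw [MeasureTheory.ae_iff]
      convert line1_null 0 using 2
      simp
    have h3 : ∀ᵐ u : ℝ×ℝ ∂volume, u.1 ≠ t := by
      rw [MeasureTheory.ae_iff]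
      convert line1_null t using 2
      simp
    exact h1.and (h2.and h3)
  -- near pointwise bound
  have hnear : ∀ u : ℝ×ℝ, u.2 ≠ 0 →
      f u ≤ 2^α * C^α * ((|t - u.1| ^ p1 + |u.2| ^ p2) ^ β + (|u.1| ^ p1 + |u.2| ^ p2) ^ β) := by
    intro u hy
    have hw1 : ((t - u.1, -u.2) : ℝ×ℝ) ≠ 0 := by
      rw [Ne, Prod.mk_eq_zero]
      rintro ⟨-, h2⟩
      exact hy (neg_eq_zero.1 h2)
    have hw2 : ((-u.1, -u.2) : ℝ×ℝ) ≠ 0 := by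
      rw [Ne, Prod.mk_eq_zero]
      rintro ⟨-, h2⟩
      exact hy (neg_eq_zero.1 h2)
    have h1 := hD2 _ hw1
    have h2 := hD2 _ hw2
    simp only [rho0, abs_neg] at h1 h2
    set ρ1 : ℝ := |t - u.1| ^ p1 + |u.2| ^ p2 with hρ1def
    set ρ2 : ℝ := |u.1| ^ p1 + |u.2| ^ p2 with hρ2def
    have hρ1 : 0 ≤ ρ1 := add_nonneg (Real.rpow_nonneg (abs_nonneg _) _)
      (Real.rpow_nonneg (abs_nonneg _) _)
    have hρ2 : 0 ≤ ρ2 := add_nonneg (Real.rpow_nonneg (abs_nonneg _) _)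
      (Real.rpow_nonneg (abs_nonneg _) _)
    have htri : |pd2 g0 (t - u.1, -u.2) - pd2 g0 (-u.1, -u.2)| ≤ C * ρ1 ^ c + C * ρ2 ^ c :=
      (abs_sub _ _).trans (add_le_add h1 h2)
    have hs1 : (0:ℝ) ≤ C * ρ1 ^ c := mul_nonneg hC.le (Real.rpow_nonneg hρ1 _)
    have hs2 : (0:ℝ) ≤ C * ρ2 ^ c := mul_nonneg hC.le (Real.rpow_nonneg hρ2 _)
    calc f u ≤ (C * ρ1 ^ c + C * ρ2 ^ c) ^ α :=
          Real.rpow_le_rpow (abs_nonneg _) htri hα0.le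
      _ ≤ 2 ^ α * ((C * ρ1 ^ c) ^ α + (C * ρ2 ^ c) ^ α) := add_rpow_le_two_rpow hs1 hs2 hα0.le
      _ = 2 ^ α * C ^ α * (ρ1 ^ β + ρ2 ^ β) := by
          rw [Real.mul_rpow hC.le (Real.rpow_nonneg hρ1 _),
            Real.mul_rpow hC.le (Real.rpow_nonneg hρ2 _),
            ← Real.rpow_mul hρ1, ← Real.rpow_mul hρ2, ← hβdef]
          ring
  -- far pointwise bound
  have hfar : ∀ (x y r : ℝ), 0 < r → (∀ s ∈ Icc (0:ℝ) t, r ≤ rho0 p1 p2 (s - x, -y)) →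
      |pd2 g0 (t - x, -y) - pd2 g0 (-x, -y)| ^ α ≤ (C*t)^α * r^(-α) := by
    intro x y r hr hseg
    exact rpow_div_bound (by positivity) hr hα0.le (far_bound hsm hp1 hp2 hC hD12 ht hr hseg)
  -- regions
  set Sfx : Set ℝ := {x | M < |x|} with hSfxdef
  set Sfy : Set ℝ := {y | M < |y|} with hSfydef
  set S1y : Set ℝ := {y | 1 < |y|} with hS1ydef
  have hSfx_meas : MeasurableSet Sfx := (isOpen_lt continuous_const continuous_abs).measurableSet
  have hSfy_meas : MeasurableSet Sfy := (isOpen_lt continuous_const continuous_abs).measurableSet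
  have hS1y_meas : MeasurableSet S1y := (isOpen_lt continuous_const continuous_abs).measurableSet
  set R0 : Set (ℝ×ℝ) := Icc (-M) M ×ˢ Icc (-M) M with hR0def
  set R1a : Set (ℝ×ℝ) := Sfx ×ˢ Icc (-1:ℝ) 1 with hR1adef
  set R1b : Set (ℝ×ℝ) := Sfx ×ˢ S1y with hR1bdef
  set R2 : Set (ℝ×ℝ) := Icc (-M) M ×ˢ Sfy with hR2def
  have hR0meas : MeasurableSet R0 := measurableSet_Icc.prod measurableSet_Icc
  have hR1ameas : MeasurableSet R1a := hSfx_meas.prod measurableSet_Icc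
  have hR1bmeas : MeasurableSet R1b := hSfx_meas.prod hS1y_meas
  have hR2meas : MeasurableSet R2 := measurableSet_Icc.prod hSfy_meas
  -- Region R0
  have hR0int : IntegrableOn f R0 := by
    rcases lt_or_ge β 0 with hβneg | hβpos
    · have hgint : IntegrableOn (fun u : ℝ×ℝ =>
          2^α * C^α * ((|t - u.1| ^ (q*β) * |u.2| ^ (q*β)) + |u.1| ^ (q*β) * |u.2| ^ (q*β)))
          R0 := by
        have ha := prod_intOn (abs_sub_rpow_int_Icc (q*β) hqβ t (-M) M)
          (abs_rpow_int_Icc (q*β) hqβ (-M) M)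
        have hb := prod_intOn (abs_rpow_int_Icc (q*β) hqβ (-M) M)
          (abs_rpow_int_Icc (q*β) hqβ (-M) M)
        exact (ha.add hb).const_mul (2^α * C^α)
      apply Integrable.mono' hgint haesm.restrict
      filter_upwards [ae_restrict_of_ae hae3] with u hnz
      obtain ⟨hy0, hx0, hxt⟩ := hnz
      rw [Real.norm_eq_abs, abs_of_nonneg (hfnonneg u)]
      refine (hnear u hy0).trans ?_
      have e1 := rho_term_le hp1 hp2 hql1 hql2 hl0 hl1 hβneg.le
        (x := t - u.1) (y := u.2) (sub_ne_zero.2 (Ne.symm hxt)) hy0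
      have e2 := rho_term_le hp1 hp2 hql1 hql2 hl0 hl1 hβneg.le
        (x := u.1) (y := u.2) hx0 hy0
      have hKnn : (0:ℝ) ≤ 2^α * C^α := by positivity
      exact mul_le_mul_of_nonneg_left (add_le_add e1 e2) hKnn
    · set D : ℝ := (M + t)^p1 + M^p2 with hDdef
      have hDnn : 0 ≤ D := add_nonneg (Real.rpow_nonneg (by linarith) _)
        (Real.rpow_nonneg hM0.le _)
      have hgint : IntegrableOn (fun _ : ℝ×ℝ => 2^α * C^α * (D^β + D^β)) R0 :=
        integrableOn_const ((isCompact_Icc.prod isCompact_Icc).measure_lt_top.ne)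
      apply Integrable.mono' hgint haesm.restrict
      filter_upwards [ae_restrict_mem hR0meas, ae_restrict_of_ae hae3] with u hu hnz
      rw [Real.norm_eq_abs, abs_of_nonneg (hfnonneg u)]
      refine (hnear u hnz.1).trans ?_
      obtain ⟨hu1, hu2⟩ := hu
      have hx : |u.1| ≤ M := abs_le.2 ⟨hu1.1, hu1.2⟩
      have hy : |u.2| ≤ M := abs_le.2 ⟨hu2.1, hu2.2⟩
      have hxt : |t - u.1| ≤ M + t := by
        have := abs_sub t u.1
        have h0 : |t| = t := abs_of_pos ht
        linarith
      have hρ1D : |t - u.1| ^ p1 + |u.2| ^ p2 ≤ D := by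
        rw [hDdef]
        exact add_le_add (Real.rpow_le_rpow (abs_nonneg _) hxt hp1.le)
          (Real.rpow_le_rpow (abs_nonneg _) hy hp2.le)
      have hρ2D : |u.1| ^ p1 + |u.2| ^ p2 ≤ D := by
        rw [hDdef]
        exact add_le_add (Real.rpow_le_rpow (abs_nonneg _) (by linarith) hp1.le)
          (Real.rpow_le_rpow (abs_nonneg _) hy hp2.le)
      have hb1 : (|t - u.1| ^ p1 + |u.2| ^ p2) ^ β ≤ D ^ β :=
        Real.rpow_le_rpow (by positivity) hρ1D hβpos
      have hb2 : (|u.1| ^ p1 + |u.2| ^ p2) ^ β ≤ D ^ β :=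
        Real.rpow_le_rpow (by positivity) hρ2D hβpos
      have hKnn : (0:ℝ) ≤ 2^α * C^α := by positivity
      exact mul_le_mul_of_nonneg_left (add_le_add hb1 hb2) hKnn
  -- Region R1a
  have hhalf_int : ∀ e : ℝ, e < -1 → IntegrableOn (fun x : ℝ => (|x|/2) ^ e) Sfx := by
    intro e he
    have h1 : IntegrableOn (fun x : ℝ => |x| ^ e * ((2:ℝ)^e)⁻¹) {x : ℝ | M < |x|} :=
      (abs_rpow_int_far e he M hM0).mul_const (((2:ℝ)^e)⁻¹)
    apply IntegrableOn.congr_fun h1 _ hSfx_meas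
    intro x _
    show |x| ^ e * ((2:ℝ)^e)⁻¹ = (|x|/2)^e
    rw [Real.div_rpow (abs_nonneg x) (by norm_num), div_eq_mul_inv]
  have hR1aint : IntegrableOn f R1a := by
    have hex : p1 * -α < -1 := by nlinarith
    have hgx : IntegrableOn (fun x : ℝ => (|x|/2) ^ (p1 * -α)) Sfx := hhalf_int _ hex
    have hgy : IntegrableOn (fun _ : ℝ => (1:ℝ)) (Icc (-1:ℝ) 1) :=
      integrableOn_const (by rw [Real.volume_Icc]; exact ENNReal.ofReal_lt_top.ne)
    have hgint := (prod_intOn hgx hgy).const_mul ((C*t)^α)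
    apply Integrable.mono' hgint haesm.restrict
    filter_upwards [ae_restrict_mem hR1ameas] with u hu
    obtain ⟨hux, huy⟩ := hu
    rw [Real.norm_eq_abs, abs_of_nonneg (hfnonneg u)]
    have habs : 0 < |u.1| := lt_trans hM0 hux
    have hr : 0 < (|u.1|/2) ^ p1 := Real.rpow_pos_of_pos (by linarith) _
    refine (hfar u.1 u.2 _ hr (hrho_ge1 u.1 u.2 hux)).trans ?_
    rw [mul_one, ← Real.rpow_mul (by positivity : (0:ℝ) ≤ |u.1|/2)]
  -- Region R1b
  have hR1bint : IntegrableOn f R1b := by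
    have hex : q * -α < -1 := by nlinarith
    have hgx : IntegrableOn (fun x : ℝ => (|x|/2) ^ (q * -α)) Sfx := hhalf_int _ hex
    have hgy : IntegrableOn (fun y : ℝ => |y| ^ (q * -α)) S1y :=
      abs_rpow_int_far _ hex 1 one_pos
    have hgint := (prod_intOn hgx hgy).const_mul ((C*t)^α)
    apply Integrable.mono' hgint haesm.restrict
    filter_upwards [ae_restrict_mem hR1bmeas] with u hu
    obtain ⟨hux, huy⟩ := hu
    rw [Real.norm_eq_abs, abs_of_nonneg (hfnonneg u)]
    have habs : 0 < |u.1| := lt_trans hM0 hux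
    have hA : 0 < (|u.1|/2) ^ p1 := Real.rpow_pos_of_pos (by linarith) _
    have hB : 0 < |u.2| ^ p2 := Real.rpow_pos_of_pos (by exact lt_trans one_pos huy) _
    have hr : 0 < max ((|u.1|/2) ^ p1) (|u.2| ^ p2) := lt_max_of_lt_left hA
    have hseg : ∀ s ∈ Icc (0:ℝ) t,
        max ((|u.1|/2) ^ p1) (|u.2| ^ p2) ≤ rho0 p1 p2 (s - u.1, -u.2) := by
      intro s hs
      exact max_le (hrho_ge1 u.1 u.2 hux s hs) (hrho_ge2 u.1 u.2 s hs)
    refine (hfar u.1 u.2 _ hr hseg).trans ?_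
    have hmax := max_rpow_le hA hB (neg_nonpos_of_nonneg hα0.le) hl0 hl1
    have heq1 : ((|u.1|/2) ^ p1) ^ (l * -α) = (|u.1|/2) ^ (q * -α) := by
      rw [← Real.rpow_mul (by positivity : (0:ℝ) ≤ |u.1|/2), ← mul_assoc, hql1]
    have heq2 : (|u.2| ^ p2) ^ ((1 - l) * -α) = |u.2| ^ (q * -α) := by
      rw [← Real.rpow_mul (abs_nonneg _), ← mul_assoc, hql2]
    rw [heq1, heq2] at hmax
    exact mul_le_mul_of_nonneg_left hmax (by positivity)
  -- Region R2
  have hR2int : IntegrableOn f R2 := by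
    have hex : p2 * -α < -1 := by nlinarith
    have hgx : IntegrableOn (fun _ : ℝ => (1:ℝ)) (Icc (-M) M) :=
      integrableOn_const (by rw [Real.volume_Icc]; exact ENNReal.ofReal_lt_top.ne)
    have hgy : IntegrableOn (fun y : ℝ => |y| ^ (p2 * -α)) Sfy :=
      abs_rpow_int_far _ hex M hM0
    have hgint := (prod_intOn hgx hgy).const_mul ((C*t)^α)
    apply Integrable.mono' hgint haesm.restrict
    filter_upwards [ae_restrict_mem hR2meas] with u hu
    obtain ⟨hux, huy⟩ := hu
    rw [Real.norm_eq_abs, abs_of_nonneg (hfnonneg u)]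
    have habs : 0 < |u.2| := lt_trans hM0 huy
    have hr : 0 < |u.2| ^ p2 := Real.rpow_pos_of_pos habs _
    refine (hfar u.1 u.2 _ hr (fun s hs => hrho_ge2 u.1 u.2 s hs)).trans ?_
    rw [one_mul, ← Real.rpow_mul (abs_nonneg _)]
  -- assembly
  have hcover : (univ : Set (ℝ×ℝ)) ⊆ R0 ∪ R1a ∪ R1b ∪ R2 := by
    intro u _
    rcases le_or_gt |u.1| M with hx | hx
    · rcases le_or_gt |u.2| M with hy | hy
      · exact Or.inl (Or.inl (Or.inl ⟨mem_Icc.2 (abs_le.1 hx), mem_Icc.2 (abs_le.1 hy)⟩))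
      · exact Or.inr ⟨mem_Icc.2 (abs_le.1 hx), hy⟩
    · rcases le_or_gt |u.2| 1 with hy | hy
      · exact Or.inl (Or.inl (Or.inr ⟨hx, mem_Icc.2 (abs_le.1 hy)⟩))
      · exact Or.inl (Or.inr ⟨hx, hy⟩)
  rw [← integrableOn_univ]
  exact (((hR0int.union hR1aint).union hR1bint).union hR2int).mono_set hcover
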